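/- Let D be a division ring with center F, K a subfield of D containing F, and x ∈ D an element that is left algebraic over K and satisfies xKx⁻¹ ⊆ K. Then L = K + Kx + Kx² + ⋯, the left K-subspace of D spanned by the powers of x, is a division subring of D that is finite-dimensional as a left K-vector space. -/
import Mathlib


/-- Let `D` be a division ring with center `F`, `K` a subfield of `D` containing `F`,
and `x ∈ D` left algebraic over `K` with `x K x⁻¹ ⊆ K`. Then the left `K`-span `L` of
the powers of `x` is a division subring of `D` which is finite dimensional as a left
`K`-vector space. -/
theorem stmt11 {D : Type*} [DivisionRing D] (K : Subfield D)
    (hcomm : ∀ x ∈ K, ∀ y ∈ K, x * y = y * x)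
    (hFK : ∀ z ∈ Subring.center D, z ∈ K)
    (x : D)
    (halg : ∃ (n : ℕ) (c : Fin (n + 1) → K), (∃ i, c i ≠ 0) ∧
      ∑ i : Fin (n + 1), (c i : D) * x ^ (i : ℕ) = 0)
    (hinv : ∀ k ∈ K, x * k * x⁻¹ ∈ K) :
    (1 : D) ∈ Submodule.span K (Set.range fun n : ℕ => x ^ n) ∧
    (∀ a ∈ Submodule.span K (Set.range fun n : ℕ => x ^ n),
      ∀ b ∈ Submodule.span K (Set.range fun n : ℕ => x ^ n),
        a * b ∈ Submodule.span K (Set.range fun n : ℕ => x ^ n)) ∧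
    (∀ a ∈ Submodule.span K (Set.range fun n : ℕ => x ^ n), a ≠ 0 →
      a⁻¹ ∈ Submodule.span K (Set.range fun n : ℕ => x ^ n)) ∧
    Module.Finite K (Submodule.span K (Set.range fun n : ℕ => x ^ n)) := by
  set L := Submodule.span K (Set.range fun n : ℕ => x ^ n) with hLdef
  have hsmul : ∀ (k : K) (a : D), k • a = (k : D) * a := fun _ _ => rfl
  -- 1 ∈ L
  have one_mem : (1 : D) ∈ L := Submodule.subset_span ⟨0, pow_zero x⟩
  -- commuting K past powers of x
  have key : ∀ k ∈ K, x * k = (x * k * x⁻¹) * x := by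
    intro k hk
    rcases eq_or_ne x 0 with rfl | hx
    · simp
    · rw [mul_assoc, inv_mul_cancel₀ hx, mul_one]
  have pow_comm : ∀ (n : ℕ), ∀ k ∈ K, ∃ k' ∈ K, x ^ n * k = k' * x ^ n := by
    intro n
    induction n with
    | zero => exact fun k hk => ⟨k, hk, by simp⟩
    | succ n ih =>
      intro k hk
      obtain ⟨k', hk', h⟩ := ih k hk
      refine ⟨x * k' * x⁻¹, hinv k' hk', ?_⟩
      calc x ^ (n + 1) * k = x * (x ^ n * k) := by rw [pow_succ', mul_assoc]
        _ = x * (k' * x ^ n) := by rw [h]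
        _ = (x * k') * x ^ n := by rw [mul_assoc]
        _ = ((x * k' * x⁻¹) * x) * x ^ n := by rw [← key k' hk']
        _ = (x * k' * x⁻¹) * x ^ (n + 1) := by rw [mul_assoc, ← pow_succ']
  -- L closed under right mult by K
  have mulK : ∀ k ∈ K, ∀ a ∈ L, a * k ∈ L := by
    intro k hk a ha
    induction ha using Submodule.span_induction with
    | mem a ha =>
      obtain ⟨n, rfl⟩ := ha
      obtain ⟨k', hk', h⟩ := pow_comm n k hk
      rw [h, ← hsmul ⟨k', hk'⟩]
      exact Submodule.smul_mem _ _ (Submodule.subset_span ⟨n, rfl⟩)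
    | zero => simpa using Submodule.zero_mem L
    | add a b _ _ ha hb => rw [add_mul]; exact Submodule.add_mem _ ha hb
    | smul c a _ ha => rw [hsmul, mul_assoc, ← hsmul]; exact Submodule.smul_mem _ _ ha
  -- L closed under right mult by powers of x
  have mulPow : ∀ (n : ℕ), ∀ a ∈ L, a * x ^ n ∈ L := by
    intro n a ha
    induction ha using Submodule.span_induction with
    | mem a ha =>
      obtain ⟨m, rfl⟩ := ha
      rw [← pow_add]
      exact Submodule.subset_span ⟨m + n, rfl⟩
    | zero => simpa using Submodule.zero_mem L
    | add a b _ _ ha hb => rw [add_mul]; exact Submodule.add_mem _ ha hb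
    | smul c a _ ha => rw [hsmul, mul_assoc, ← hsmul]; exact Submodule.smul_mem _ _ ha
  -- L closed under multiplication
  have mul_mem : ∀ a ∈ L, ∀ b ∈ L, a * b ∈ L := by
    intro a ha b hb
    induction hb using Submodule.span_induction generalizing a with
    | mem b hbm =>
      obtain ⟨n, rfl⟩ := hbm
      exact mulPow n a ha
    | zero => simpa using Submodule.zero_mem L
    | add b₁ b₂ _ _ h₁ h₂ => rw [mul_add]; exact Submodule.add_mem _ (h₁ a ha) (h₂ a ha)
    | smul c b _ hIH =>
      rw [hsmul, ← mul_assoc]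
      exact hIH _ (mulK c c.2 a ha)
  -- finite dimensionality
  classical
  obtain ⟨n, c, ⟨i₀, hi₀⟩, hsum⟩ := halg
  have hTne : (Finset.univ.filter (fun i => c i ≠ 0)).Nonempty :=
    ⟨i₀, by simp [hi₀]⟩
  set m : Fin (n + 1) := (Finset.univ.filter (fun i => c i ≠ 0)).max' hTne with hm
  have hcm : c m ≠ 0 := by
    have := (Finset.univ.filter (fun i => c i ≠ 0)).max'_mem hTne
    simpa using this
  have hgt : ∀ i, m < i → c i = 0 := by
    intro i hi
    by_contra h
    exact absurd (Finset.le_max' (Finset.univ.filter (fun i => c i ≠ 0)) i (by simp [h])) (not_le.mpr hi)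
  have hcmD : (c m : D) ≠ 0 := fun h => hcm (Subtype.ext h)
  set M := (m : ℕ) with hMdef
  set Sm := Submodule.span K (Set.range fun i : Fin M => x ^ (i : ℕ)) with hSm
  -- x ^ M ∈ Sm
  have hxm : x ^ M ∈ Sm := by
    rw [← Finset.add_sum_erase _ _ (Finset.mem_univ m)] at hsum
    have hx : x ^ M = ((c m)⁻¹ : K) • (-(∑ i ∈ Finset.univ.erase m, (c i : D) * x ^ (i : ℕ))) := by
      rw [hsmul]
      push_cast
      rw [← eq_neg_of_add_eq_zero_left hsum, ← mul_assoc, inv_mul_cancel₀ hcmD, one_mul]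
    rw [hx]
    refine Submodule.smul_mem _ _ (Submodule.neg_mem _ (Submodule.sum_mem _ ?_))
    intro i hi
    rcases lt_or_ge i m with h | h
    · rw [← hsmul (c i)]
      refine Submodule.smul_mem _ _ (Submodule.subset_span ⟨⟨(i : ℕ), h⟩, rfl⟩)
    · have : m < i := lt_of_le_of_ne h (fun he => (Finset.mem_erase.mp hi).1 he.symm)
      rw [hgt i this]
      simpa using Submodule.zero_mem Sm
  -- Sm closed under right mult by x
  have step : ∀ a ∈ Sm, a * x ∈ Sm := by
    intro a ha
    induction ha using Submodule.span_induction with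
    | mem a ham =>
      obtain ⟨i, rfl⟩ := ham
      rw [← pow_succ]
      rcases lt_or_eq_of_le (Nat.succ_le_of_lt i.2) with h | h
      · exact Submodule.subset_span ⟨⟨(i : ℕ) + 1, h⟩, rfl⟩
      · rw [show (i : ℕ) + 1 = M from h]; exact hxm
    | zero => simpa using Submodule.zero_mem Sm
    | add a b _ _ ha hb => rw [add_mul]; exact Submodule.add_mem _ ha hb
    | smul c a _ ha => rw [hsmul, mul_assoc, ← hsmul]; exact Submodule.smul_mem _ _ ha
  have pow_mem : ∀ j : ℕ, x ^ j ∈ Sm := by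
    intro j
    induction j with
    | zero =>
      rcases Nat.eq_zero_or_pos M with h | h
      · have := hxm; rw [h] at this; exact this
      · exact Submodule.subset_span ⟨⟨0, h⟩, rfl⟩
    | succ j ih => rw [pow_succ]; exact step _ ih
  have hLSm : L = Sm := by
    apply le_antisymm
    · rw [hLdef, Submodule.span_le]
      rintro _ ⟨j, rfl⟩
      exact pow_mem j
    · rw [hSm, Submodule.span_le]
      rintro _ ⟨i, rfl⟩
      exact Submodule.subset_span ⟨(i : ℕ), rfl⟩
  have hfin : Module.Finite K L := by
    rw [hLSm]
    exact FiniteDimensional.span_of_finite K (Set.finite_range _)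
  -- inverses
  refine ⟨one_mem, mul_mem, ?_, hfin⟩
  intro a ha hane
  haveI : Module.Finite K L := hfin
  let f : L →ₗ[K] L :=
    { toFun := fun b => ⟨(b : D) * a, mul_mem _ b.2 _ ha⟩
      map_add' := fun b₁ b₂ => by ext; simp [add_mul]
      map_smul' := fun k b => by ext; simp [hsmul, mul_assoc] }
  have hinj : Function.Injective f := by
    intro b₁ b₂ h
    have h' : (b₁ : D) * a = (b₂ : D) * a := congrArg Subtype.val h
    exact Subtype.ext (mul_right_cancel₀ hane h')
  obtain ⟨b, hb⟩ := (LinearMap.injective_iff_surjective.mp hinj) ⟨1, one_mem⟩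
  have hb' : (b : D) * a = 1 := congrArg Subtype.val hb
  have : (b : D) = a⁻¹ := eq_inv_of_mul_eq_one_left hb'
  rw [← this]
  exact b.2
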